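/- Let (θ_k) be sub-multiplicative potentials with equilibrium states ν_k (i.e. P(θ_k) = h(ν_k) + Λ(θ_k,ν_k)). If ν_k → ν weakly* and θ_k(i)^{1/|i|} → θ(i)^{1/|i|} uniformly on Σ_* for a sub-multiplicative potential θ, then lim_{k→∞} (Λ(θ_k,ν_k) − Λ(θ,ν_k)) = 0 and ν is an equilibrium state for θ, i.e. P(θ) = h(ν) + Λ(θ,ν). -/

import Mathlib

open MeasureTheory Filter Topology

/-- The prefix of length `n` of an infinite word in the shift space `{1,…,N}^ℕ`. -/
def wordPrefix {N : ℕ} (x : ℕ → Fin N) (n : ℕ) : List (Fin N) :=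
  List.ofFn fun k : Fin n => x k

/-- The left shift on the full shift space. -/
def shiftMap (N : ℕ) : (ℕ → Fin N) → ℕ → Fin N := fun x n => x (n + 1)

/-- The measure of the cylinder set `[w]` as a real number. -/
noncomputable def cylMass {N : ℕ} (μ : Measure (ℕ → Fin N)) (w : List (Fin N)) : ℝ :=
  (μ {x | wordPrefix x w.length = w}).toReal

/-- The Kolmogorov–Sinai entropy `h(ν) = inf_n -(1/n) Σ_{|w|=n} ν[w] log ν[w]`. -/
noncomputable def entropyInv {N : ℕ} (ν : Measure (ℕ → Fin N)) : ℝ :=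
  ⨅ n : ℕ+, -((n : ℝ)⁻¹) * ∑ w : Fin (n : ℕ) → Fin N,
    cylMass ν (List.ofFn w) * Real.log (cylMass ν (List.ofFn w))

/-- `Λ(θ,ν) = inf_n (1/n) ∫ log θ(i|_n) dν(i)`, as an extended real number. -/
noncomputable def LyapE {N : ℕ} (θ : List (Fin N) → ℝ) (ν : Measure (ℕ → Fin N)) : EReal :=
  ⨅ n : ℕ+, (((n : ℝ)⁻¹ * ∫ x, Real.log (θ (wordPrefix x n)) ∂ν : ℝ) : EReal)

/-- The pressure `P(θ) = inf_n (1/n) log Σ_{|w|=n} θ(w)`, as an extended real number. -/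
noncomputable def pressureE {N : ℕ} (θ : List (Fin N) → ℝ) : EReal :=
  ⨅ n : ℕ+, (((n : ℝ)⁻¹ * Real.log (∑ w : Fin (n : ℕ) → Fin N, θ (List.ofFn w)) : ℝ) : EReal)

namespace Stmt14Aux

variable {N : ℕ}

noncomputable def Hn (ν : Measure (ℕ → Fin N)) (n : ℕ+) : ℝ :=
  -((n : ℝ)⁻¹) * ∑ w : Fin (n : ℕ) → Fin N,
    cylMass ν (List.ofFn w) * Real.log (cylMass ν (List.ofFn w))

noncomputable def Ln (θ : List (Fin N) → ℝ) (ν : Measure (ℕ → Fin N)) (n : ℕ+) : ℝ :=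
  (n : ℝ)⁻¹ * ∫ x, Real.log (θ (wordPrefix x n)) ∂ν

noncomputable def An (θ : List (Fin N) → ℝ) (n : ℕ+) : ℝ :=
  (n : ℝ)⁻¹ * Real.log (∑ w : Fin (n : ℕ) → Fin N, θ (List.ofFn w))

lemma entropyInv_eq (ν : Measure (ℕ → Fin N)) : entropyInv ν = ⨅ n : ℕ+, Hn ν n := rfl
lemma LyapE_eq (θ : List (Fin N) → ℝ) (ν : Measure (ℕ → Fin N)) :
    LyapE θ ν = ⨅ n : ℕ+, ((Ln θ ν n : ℝ) : EReal) := rfl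
lemma pressureE_eq (θ : List (Fin N) → ℝ) :
    pressureE θ = ⨅ n : ℕ+, ((An θ n : ℝ) : EReal) := rfl

def proj (N n : ℕ) (x : ℕ → Fin N) : Fin n → Fin N := fun k => x k

lemma measurable_proj (n : ℕ) : Measurable (proj N n) :=
  measurable_pi_lambda _ fun _ => measurable_pi_apply _

lemma continuous_proj (n : ℕ) : Continuous (proj N n) :=
  continuous_pi fun _ => continuous_apply _

lemma cylMass_map (ν : Measure (ℕ → Fin N)) {n : ℕ} (w : Fin n → Fin N) :
    cylMass ν (List.ofFn w) = ((Measure.map (proj N n) ν) {w}).toReal := by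
  rw [Measure.map_apply (measurable_proj n) (measurableSet_singleton w)]
  have hset : {x : ℕ → Fin N | wordPrefix x (List.ofFn w).length = List.ofFn w} =
      proj N n ⁻¹' {w} := by
    rw [List.length_ofFn]
    ext x
    simp only [Set.mem_setOf_eq, Set.mem_preimage, Set.mem_singleton_iff, wordPrefix,
      List.ofFn_inj]
    exact Iff.rfl
  unfold cylMass
  rw [hset]

lemma integral_comp_proj (ν : Measure (ℕ → Fin N)) [IsProbabilityMeasure ν] (n : ℕ)
    (g : (Fin n → Fin N) → ℝ) :
    ∫ x, g (proj N n x) ∂ν = ∑ w : Fin n → Fin N, cylMass ν (List.ofFn w) * g w := by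
  have hm := measurable_proj (N := N) n
  have : IsProbabilityMeasure (Measure.map (proj N n) ν) :=
    Measure.isProbabilityMeasure_map hm.aemeasurable
  rw [← integral_map hm.aemeasurable (measurable_of_countable g).aestronglyMeasurable,
    integral_fintype (Integrable.of_finite)]
  exact Finset.sum_congr rfl fun w _ => by rw [Measure.real, cylMass_map, smul_eq_mul]

lemma sum_cylMass (ν : Measure (ℕ → Fin N)) [IsProbabilityMeasure ν] (n : ℕ) :
    ∑ w : Fin n → Fin N, cylMass ν (List.ofFn w) = 1 := by
  have h := integral_comp_proj ν n (fun _ => (1 : ℝ))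
  simp only [mul_one, integral_const, measure_univ, ENNReal.toReal_one, smul_eq_mul, one_mul, probReal_univ] at h
  exact h.symm

lemma cylMass_nonneg (ν : Measure (ℕ → Fin N)) (w : List (Fin N)) : 0 ≤ cylMass ν w :=
  ENNReal.toReal_nonneg

lemma cylMass_le_one (ν : Measure (ℕ → Fin N)) [IsProbabilityMeasure ν] (w : List (Fin N)) :
    cylMass ν w ≤ 1 := by
  have : (ν {x | wordPrefix x w.length = w}) ≤ 1 := prob_le_one
  simpa [cylMass] using ENNReal.toReal_mono (by norm_num) this

lemma Ln_eq_sum (θ : List (Fin N) → ℝ) (ν : Measure (ℕ → Fin N)) [IsProbabilityMeasure ν]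
    (n : ℕ+) :
    Ln θ ν n = (n : ℝ)⁻¹ * ∑ w : Fin (n : ℕ) → Fin N,
      cylMass ν (List.ofFn w) * Real.log (θ (List.ofFn w)) := by
  unfold Ln
  congr 1
  exact integral_comp_proj ν n fun w => Real.log (θ (List.ofFn w))

lemma Hn_nonneg (ν : Measure (ℕ → Fin N)) [IsProbabilityMeasure ν] (n : ℕ+) : 0 ≤ Hn ν n := by
  unfold Hn
  have h : ∑ w : Fin (n : ℕ) → Fin N,
      cylMass ν (List.ofFn w) * Real.log (cylMass ν (List.ofFn w)) ≤ 0 := by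
    apply Finset.sum_nonpos
    intro w _
    exact mul_nonpos_of_nonneg_of_nonpos (cylMass_nonneg _ _)
      (Real.log_nonpos (cylMass_nonneg _ _) (cylMass_le_one _ _))
  have h2 : (0:ℝ) ≤ (n : ℝ)⁻¹ := by positivity
  nlinarith

end Stmt14Aux
namespace Stmt14Aux

lemma gibbs {ι : Type*} [Fintype ι] [Nonempty ι] (p t : ι → ℝ)
    (hp : ∀ i, 0 ≤ p i) (hps : ∑ i, p i = 1) (ht : ∀ i, 0 < t i) :
    ∑ i, p i * Real.log (t i) - ∑ i, p i * Real.log (p i) ≤ Real.log (∑ i, t i) := by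
  set S := ∑ i, t i with hS
  have hSpos : 0 < S := Finset.sum_pos (fun i _ => ht i) Finset.univ_nonempty
  have key : ∀ i, p i * Real.log (t i) - p i * Real.log (p i) - p i * Real.log S
      ≤ t i / S - p i := by
    intro i
    rcases eq_or_lt_of_le (hp i) with h0 | h0
    · rw [← h0]
      have hd : (0:ℝ) ≤ t i / S := div_nonneg (ht i).le hSpos.le
      nlinarith
    · have hlog := Real.log_le_sub_one_of_pos
        (show 0 < t i / (p i * S) from div_pos (ht i) (mul_pos h0 hSpos))
      rw [Real.log_div (ne_of_gt (ht i)) (mul_pos h0 hSpos).ne',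
        Real.log_mul (ne_of_gt h0) (ne_of_gt hSpos)] at hlog
      have h2 : p i * (t i / (p i * S) - 1) = t i / S - p i := by
        field_simp
      nlinarith [mul_le_mul_of_nonneg_left hlog h0.le]
  have hsumkey := Finset.sum_le_sum (fun i (_ : i ∈ Finset.univ) => key i)
  simp only [Finset.sum_sub_distrib] at hsumkey
  rw [← Finset.sum_mul, hps, one_mul, ← Finset.sum_div, ← hS, div_self (ne_of_gt hSpos)] at hsumkey
  linarith

lemma ereal_neg_add_add (h : ℝ) (x : EReal) : ((-h : ℝ) : EReal) + ((h : EReal) + x) = x := by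
  induction x using EReal.rec with
  | bot => simp
  | coe r =>
    rw [← EReal.coe_add, ← EReal.coe_add]
    norm_num
  | top =>
    rw [EReal.add_top_of_ne_bot (by simp), EReal.add_top_of_ne_bot (by simp)]

noncomputable def addIso (h : ℝ) : EReal ≃o EReal where
  toFun x := (h : EReal) + x
  invFun x := ((-h : ℝ) : EReal) + x
  left_inv x := ereal_neg_add_add h x
  right_inv x := by
    have := ereal_neg_add_add (-h) x
    simpa using this
  map_rel_iff' := by
    intro a b
    show (h : EReal) + a ≤ (h : EReal) + b ↔ a ≤ b
    constructor
    · intro hab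
      have h2 := add_le_add_right (α := EReal) hab ((-h : ℝ) : EReal)
      rwa [ereal_neg_add_add, ereal_neg_add_add] at h2
    · intro hab
      exact add_le_add_right hab _

lemma coe_add_iInf {ι : Sort*} (h : ℝ) (f : ι → EReal) :
    (h : EReal) + ⨅ i, f i = ⨅ i, ((h : EReal) + f i) :=
  (addIso h).map_iInf f

lemma ereal_sub_coe (x : EReal) (ε : ℝ) : x - (ε : EReal) = ((-ε : ℝ) : EReal) + x := by
  rw [sub_eq_add_neg, ← EReal.coe_neg, add_comm]

lemma ereal_le_coe_ciInf {f : ℕ+ → ℝ} {x : EReal} (h : ∀ n, x ≤ ((f n : ℝ) : EReal)) :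
    x ≤ ((⨅ n, f n : ℝ) : EReal) := by
  by_contra hc
  push_neg at hc
  obtain ⟨y, h1, h2⟩ := EReal.exists_between_coe_real hc
  have hy : ⨅ n, f n < y := by exact_mod_cast h1
  obtain ⟨n, hn⟩ := exists_lt_of_ciInf_lt hy
  have : x < x := lt_of_le_of_lt (h n) (lt_trans (by exact_mod_cast hn) h2)
  exact lt_irrefl x this

lemma ereal_le_coe_of_forall {x : EReal} {r : ℝ}
    (h : ∀ ε : ℝ, 0 < ε → x ≤ ((r + ε : ℝ) : EReal)) : x ≤ (r : EReal) := by
  by_contra hc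
  push_neg at hc
  obtain ⟨y, h1, h2⟩ := EReal.exists_between_coe_real hc
  have hy : r < y := by exact_mod_cast h1
  have h3 := h (y - r) (by linarith)
  rw [show r + (y - r) = y by ring] at h3
  exact lt_irrefl x (h3.trans_lt h2)

end Stmt14Aux
namespace Stmt14Aux

variable {N : ℕ}

lemma Ln_le {θ₁ θ₂ : List (Fin N) → ℝ} {ε : ℝ}
    (hb : ∀ w : List (Fin N), Real.log (θ₁ w) - Real.log (θ₂ w) ≤ ε * w.length)
    (ν : Measure (ℕ → Fin N)) [IsProbabilityMeasure ν] (n : ℕ+) :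
    Ln θ₁ ν n ≤ Ln θ₂ ν n + ε := by
  rw [Ln_eq_sum, Ln_eq_sum]
  have npos : (0:ℝ) < ((n : ℕ) : ℝ) := by exact_mod_cast n.pos
  have hsum : ∑ w : Fin (n : ℕ) → Fin N,
      cylMass ν (List.ofFn w) * Real.log (θ₁ (List.ofFn w)) ≤
      (∑ w : Fin (n : ℕ) → Fin N,
        cylMass ν (List.ofFn w) * Real.log (θ₂ (List.ofFn w))) + ε * (n : ℕ) := by
    have h1 : ∀ w : Fin (n : ℕ) → Fin N,
        cylMass ν (List.ofFn w) * Real.log (θ₁ (List.ofFn w)) ≤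
        cylMass ν (List.ofFn w) * (Real.log (θ₂ (List.ofFn w)) + ε * (n : ℕ)) := by
      intro w
      apply mul_le_mul_of_nonneg_left _ (cylMass_nonneg _ _)
      have := hb (List.ofFn w)
      rw [List.length_ofFn] at this
      linarith
    calc ∑ w : Fin (n : ℕ) → Fin N, cylMass ν (List.ofFn w) * Real.log (θ₁ (List.ofFn w))
        ≤ ∑ w : Fin (n : ℕ) → Fin N,
            cylMass ν (List.ofFn w) * (Real.log (θ₂ (List.ofFn w)) + ε * (n : ℕ)) :=
          Finset.sum_le_sum fun w _ => h1 w
      _ = (∑ w : Fin (n : ℕ) → Fin N,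
            cylMass ν (List.ofFn w) * Real.log (θ₂ (List.ofFn w))) + ε * (n : ℕ) := by
          simp only [mul_add, Finset.sum_add_distrib, ← Finset.sum_mul,
            sum_cylMass ν (n : ℕ), one_mul]
  calc ((n : ℕ) : ℝ)⁻¹ * ∑ w : Fin (n : ℕ) → Fin N,
        cylMass ν (List.ofFn w) * Real.log (θ₁ (List.ofFn w))
      ≤ ((n : ℕ) : ℝ)⁻¹ * ((∑ w : Fin (n : ℕ) → Fin N,
          cylMass ν (List.ofFn w) * Real.log (θ₂ (List.ofFn w))) + ε * (n : ℕ)) :=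
        mul_le_mul_of_nonneg_left hsum (by positivity)
    _ = ((n : ℕ) : ℝ)⁻¹ * (∑ w : Fin (n : ℕ) → Fin N,
          cylMass ν (List.ofFn w) * Real.log (θ₂ (List.ofFn w))) + ε := by
        field_simp

lemma An_le [Nonempty (Fin N)] {θ₁ θ₂ : List (Fin N) → ℝ} {ε : ℝ}
    (h₁ : ∀ w, 0 < θ₁ w) (h₂ : ∀ w, 0 < θ₂ w)
    (hb : ∀ w : List (Fin N), Real.log (θ₁ w) - Real.log (θ₂ w) ≤ ε * w.length)
    (n : ℕ+) : An θ₁ n ≤ An θ₂ n + ε := by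
  unfold An
  have npos : (0:ℝ) < ((n : ℕ) : ℝ) := by exact_mod_cast n.pos
  have hS₂ : 0 < ∑ w : Fin (n : ℕ) → Fin N, θ₂ (List.ofFn w) :=
    Finset.sum_pos (fun w _ => h₂ _) Finset.univ_nonempty
  have hS₁ : 0 < ∑ w : Fin (n : ℕ) → Fin N, θ₁ (List.ofFn w) :=
    Finset.sum_pos (fun w _ => h₁ _) Finset.univ_nonempty
  have hpt : ∀ w : Fin (n : ℕ) → Fin N,
      θ₁ (List.ofFn w) ≤ θ₂ (List.ofFn w) * Real.exp (ε * (n : ℕ)) := by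
    intro w
    have hw := hb (List.ofFn w)
    rw [List.length_ofFn] at hw
    calc θ₁ (List.ofFn w) = Real.exp (Real.log (θ₁ (List.ofFn w))) :=
          (Real.exp_log (h₁ _)).symm
      _ ≤ Real.exp (Real.log (θ₂ (List.ofFn w)) + ε * (n : ℕ)) :=
          Real.exp_le_exp.2 (by linarith)
      _ = θ₂ (List.ofFn w) * Real.exp (ε * (n : ℕ)) := by
          rw [Real.exp_add, Real.exp_log (h₂ _)]
  have hsum : ∑ w : Fin (n : ℕ) → Fin N, θ₁ (List.ofFn w) ≤
      (∑ w : Fin (n : ℕ) → Fin N, θ₂ (List.ofFn w)) * Real.exp (ε * (n : ℕ)) := by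
    rw [Finset.sum_mul]
    exact Finset.sum_le_sum fun w _ => hpt w
  have hlog : Real.log (∑ w : Fin (n : ℕ) → Fin N, θ₁ (List.ofFn w)) ≤
      Real.log (∑ w : Fin (n : ℕ) → Fin N, θ₂ (List.ofFn w)) + ε * (n : ℕ) := by
    calc Real.log (∑ w : Fin (n : ℕ) → Fin N, θ₁ (List.ofFn w))
        ≤ Real.log ((∑ w : Fin (n : ℕ) → Fin N, θ₂ (List.ofFn w)) * Real.exp (ε * (n : ℕ))) :=
          Real.log_le_log hS₁ hsum
      _ = Real.log (∑ w : Fin (n : ℕ) → Fin N, θ₂ (List.ofFn w)) + ε * (n : ℕ) := by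
          rw [Real.log_mul hS₂.ne' (Real.exp_ne_zero _), Real.log_exp]
  calc ((n : ℕ) : ℝ)⁻¹ * Real.log (∑ w : Fin (n : ℕ) → Fin N, θ₁ (List.ofFn w))
      ≤ ((n : ℕ) : ℝ)⁻¹ *
          (Real.log (∑ w : Fin (n : ℕ) → Fin N, θ₂ (List.ofFn w)) + ε * (n : ℕ)) :=
        mul_le_mul_of_nonneg_left hlog (by positivity)
    _ = ((n : ℕ) : ℝ)⁻¹ * Real.log (∑ w : Fin (n : ℕ) → Fin N, θ₂ (List.ofFn w)) + ε := by
        field_simp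

lemma hn_add_ln_le_an [Nonempty (Fin N)] {θ : List (Fin N) → ℝ} (hpos : ∀ w, 0 < θ w)
    (ν : Measure (ℕ → Fin N)) [IsProbabilityMeasure ν] (n : ℕ+) :
    Hn ν n + Ln θ ν n ≤ An θ n := by
  rw [Ln_eq_sum]
  unfold Hn An
  have hg := gibbs (fun w : Fin (n : ℕ) → Fin N => cylMass ν (List.ofFn w))
    (fun w => θ (List.ofFn w)) (fun w => cylMass_nonneg _ _) (sum_cylMass ν (n : ℕ))
    (fun w => hpos _)
  have h2 : (0:ℝ) ≤ ((n : ℕ) : ℝ)⁻¹ := by positivity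
  nlinarith [hg]

end Stmt14Aux
namespace Stmt14Aux

variable {N : ℕ}

lemma integral_ind (n : ℕ) (w : Fin n → Fin N) (μ : Measure (ℕ → Fin N))
    [IsProbabilityMeasure μ] :
    ∫ x, (if proj N n x = w then (1:ℝ) else 0) ∂μ = cylMass μ (List.ofFn w) := by
  rw [integral_comp_proj μ n (fun w' => if w' = w then (1:ℝ) else 0)]
  simp [Finset.sum_ite_eq']

lemma tendsto_cylMass {νk : ℕ → ProbabilityMeasure (ℕ → Fin N)}
    {ν : ProbabilityMeasure (ℕ → Fin N)} (hlim : Filter.Tendsto νk Filter.atTop (nhds ν))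
    (n : ℕ) (w : Fin n → Fin N) :
    Filter.Tendsto (fun k => cylMass (νk k : Measure (ℕ → Fin N)) (List.ofFn w))
      Filter.atTop (nhds (cylMass (ν : Measure (ℕ → Fin N)) (List.ofFn w))) := by
  classical
  have hgc : Continuous fun x : ℕ → Fin N => (if proj N n x = w then (1:ℝ) else 0) := by
    have : Continuous fun w' : Fin n → Fin N => (if w' = w then (1:ℝ) else 0) :=
      continuous_of_discreteTopology
    exact this.comp (continuous_proj n)
  set f : BoundedContinuousFunction (ℕ → Fin N) ℝ :=
    BoundedContinuousFunction.mkOfBound ⟨_, hgc⟩ 1 (by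
      intro x y
      simp only [ContinuousMap.coe_mk]
      split_ifs <;> simp [Real.dist_eq] <;> norm_num) with hf
  have hcoe : ∀ x, f x = (if proj N n x = w then (1:ℝ) else 0) := fun x => rfl
  have h := MeasureTheory.ProbabilityMeasure.tendsto_iff_forall_integral_tendsto.mp hlim f
  have hint : ∀ μ : ProbabilityMeasure (ℕ → Fin N),
      ∫ x, f x ∂(μ : Measure (ℕ → Fin N)) = cylMass (μ : Measure (ℕ → Fin N)) (List.ofFn w) := by
    intro μ
    simp only [hcoe]
    exact integral_ind n w _
  rw [hint] at h
  simpa only [hint] using h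

lemma tendsto_Hn {νk : ℕ → ProbabilityMeasure (ℕ → Fin N)}
    {ν : ProbabilityMeasure (ℕ → Fin N)} (hlim : Filter.Tendsto νk Filter.atTop (nhds ν))
    (n : ℕ+) :
    Filter.Tendsto (fun k => Hn (νk k : Measure (ℕ → Fin N)) n)
      Filter.atTop (nhds (Hn (ν : Measure (ℕ → Fin N)) n)) := by
  unfold Hn
  apply Filter.Tendsto.const_mul
  apply tendsto_finset_sum
  intro w _
  exact (Real.continuous_mul_log.tendsto _).comp (tendsto_cylMass hlim (n : ℕ) w)

lemma tendsto_Ln {νk : ℕ → ProbabilityMeasure (ℕ → Fin N)}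
    {ν : ProbabilityMeasure (ℕ → Fin N)} (hlim : Filter.Tendsto νk Filter.atTop (nhds ν))
    (θ : List (Fin N) → ℝ) (n : ℕ+) :
    Filter.Tendsto (fun k => Ln θ (νk k : Measure (ℕ → Fin N)) n)
      Filter.atTop (nhds (Ln θ (ν : Measure (ℕ → Fin N)) n)) := by
  simp only [Ln_eq_sum]
  apply Filter.Tendsto.const_mul
  apply tendsto_finset_sum
  intro w _
  exact (tendsto_cylMass hlim (n : ℕ) w).mul_const _

end Stmt14Aux

open Stmt14Aux in
/-- Let `θ_k` be sub-multiplicative positive potentials with (invariant)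
equilibrium states `ν_k`, i.e. `P(θ_k) = h(ν_k) + Λ(θ_k,ν_k)`. If `ν_k → ν` weakly* and
`θ_k(w)^{1/|w|} → θ(w)^{1/|w|}` uniformly on finite words (in the sense that for every
`ε > 0` eventually `|log θ_k(w) − log θ(w)| ≤ ε|w|` for all `w`) for a sub-multiplicative
positive potential `θ`, then `Λ(θ_k,ν_k) − Λ(θ,ν_k) → 0` and `ν` is an equilibrium state for
`θ`: `P(θ) = h(ν) + Λ(θ,ν)`. -/
theorem stmt_14 {N : ℕ}
    (θk : ℕ → List (Fin N) → ℝ) (θ : List (Fin N) → ℝ)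
    (hkpos : ∀ k w, 0 < θk k w) (hpos : ∀ w, 0 < θ w)
    (hksub : ∀ k (u v : List (Fin N)), θk k (u ++ v) ≤ θk k u * θk k v)
    (hsub : ∀ u v : List (Fin N), θ (u ++ v) ≤ θ u * θ v)
    (νk : ℕ → ProbabilityMeasure (ℕ → Fin N)) (ν : ProbabilityMeasure (ℕ → Fin N))
    (hinvk : ∀ k, MeasurePreserving (shiftMap N)
      (νk k : Measure (ℕ → Fin N)) (νk k : Measure (ℕ → Fin N)))
    (heq : ∀ k, pressureE (θk k) =
      (entropyInv (νk k : Measure (ℕ → Fin N)) : EReal) +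
        LyapE (θk k) (νk k : Measure (ℕ → Fin N)))
    (hlim : Tendsto νk atTop (𝓝 ν))
    (hunif : ∀ ε > (0 : ℝ), ∃ k0, ∀ k ≥ k0, ∀ w : List (Fin N),
      |Real.log (θk k w) - Real.log (θ w)| ≤ ε * w.length) :
    (∀ ε > (0 : ℝ), ∀ᶠ k in atTop,
      LyapE θ (νk k : Measure (ℕ → Fin N)) - ((ε : ℝ) : EReal) ≤
          LyapE (θk k) (νk k : Measure (ℕ → Fin N)) ∧
        LyapE (θk k) (νk k : Measure (ℕ → Fin N)) ≤
          LyapE θ (νk k : Measure (ℕ → Fin N)) + ((ε : ℝ) : EReal)) ∧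
    pressureE θ =
      (entropyInv (ν : Measure (ℕ → Fin N)) : EReal) + LyapE θ (ν : Measure (ℕ → Fin N)) := by
  classical
  have hne : Nonempty (ℕ → Fin N) := by
    by_contra hemp
    rw [not_nonempty_iff] at hemp
    have h1 : (ν : Measure (ℕ → Fin N)) Set.univ = 1 := measure_univ
    rw [Set.univ_eq_empty_iff.mpr hemp, measure_empty] at h1
    exact zero_ne_one h1
  have hNe : Nonempty (Fin N) := ⟨hne.some 0⟩
  have lyap_comp : ∀ (ε : ℝ), 0 < ε → ∀ (k : ℕ),
      (∀ w : List (Fin N), |Real.log (θk k w) - Real.log (θ w)| ≤ ε * w.length) →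
      (LyapE θ (νk k : Measure (ℕ → Fin N)) - ((ε : ℝ) : EReal) ≤
          LyapE (θk k) (νk k : Measure (ℕ → Fin N)) ∧
        LyapE (θk k) (νk k : Measure (ℕ → Fin N)) ≤
          LyapE θ (νk k : Measure (ℕ → Fin N)) + ((ε : ℝ) : EReal)) := by
    intro ε hε k hb
    have hb1 : ∀ w : List (Fin N), Real.log (θ w) - Real.log (θk k w) ≤ ε * w.length := by
      intro w
      have := abs_le.mp (hb w)
      linarith [this.1]
    have hb2 : ∀ w : List (Fin N), Real.log (θk k w) - Real.log (θ w) ≤ ε * w.length :=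
      fun w => (le_abs_self _).trans (hb w)
    constructor
    · rw [LyapE_eq θ, LyapE_eq (θk k), ereal_sub_coe, coe_add_iInf]
      refine iInf_mono fun n => ?_
      rw [← EReal.coe_add]
      refine EReal.coe_le_coe_iff.2 ?_
      have := Ln_le hb1 (νk k : Measure (ℕ → Fin N)) n
      linarith
    · rw [LyapE_eq θ, LyapE_eq (θk k), add_comm _ ((ε : ℝ) : EReal), coe_add_iInf]
      refine iInf_mono fun n => ?_
      rw [← EReal.coe_add]
      refine EReal.coe_le_coe_iff.2 ?_
      have := Ln_le hb2 (νk k : Measure (ℕ → Fin N)) n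
      linarith
  have press_comp : ∀ (ε : ℝ) (k : ℕ),
      (∀ w : List (Fin N), Real.log (θ w) - Real.log (θk k w) ≤ ε * w.length) →
      pressureE θ ≤ pressureE (θk k) + ((ε : ℝ) : EReal) := by
    intro ε k hb1
    rw [pressureE_eq θ, pressureE_eq (θk k), add_comm _ ((ε : ℝ) : EReal), coe_add_iInf]
    refine iInf_mono fun n => ?_
    rw [← EReal.coe_add]
    refine EReal.coe_le_coe_iff.2 ?_
    have := An_le hpos (hkpos k) hb1 n
    linarith
  have hbddH : ∀ (μ : ProbabilityMeasure (ℕ → Fin N)),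
      BddBelow (Set.range fun m : ℕ+ => Hn (μ : Measure (ℕ → Fin N)) m) := by
    intro μ
    refine ⟨0, ?_⟩
    rintro x ⟨m, rfl⟩
    exact Hn_nonneg _ m
  refine ⟨?_, ?_⟩
  · intro ε hε
    obtain ⟨k0, hk0⟩ := hunif ε hε
    rw [eventually_atTop]
    exact ⟨k0, fun k hk => lyap_comp ε hε k (hk0 k hk)⟩
  refine le_antisymm ?_ ?_
  · have key : ∀ m n : ℕ+, pressureE θ ≤
        ((Hn (ν : Measure (ℕ → Fin N)) m + Ln θ (ν : Measure (ℕ → Fin N)) n : ℝ) : EReal) := by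
      intro m n
      apply ereal_le_coe_of_forall
      intro ε hε
      obtain ⟨k0, hk0⟩ := hunif (ε/2) (by linarith)
      have hstep : ∀ k ≥ k0, pressureE θ ≤
          ((Hn (νk k : Measure (ℕ → Fin N)) m + Ln θ (νk k : Measure (ℕ → Fin N)) n + ε : ℝ)
            : EReal) := by
        intro k hk
        have hb := hk0 k hk
        have hb1 : ∀ w : List (Fin N), Real.log (θ w) - Real.log (θk k w) ≤ (ε/2) * w.length := by
          intro w
          have := abs_le.mp (hb w)
          linarith [this.1]
        have h1 := press_comp (ε/2) k hb1
        rw [heq k] at h1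
        have h2'' : LyapE θ (νk k : Measure (ℕ → Fin N)) ≤
            ((Ln θ (νk k : Measure (ℕ → Fin N)) n : ℝ) : EReal) := by
          rw [LyapE_eq]
          exact iInf_le _ n
        have h2 : LyapE (θk k) (νk k : Measure (ℕ → Fin N)) ≤
            ((Ln θ (νk k : Measure (ℕ → Fin N)) n + ε/2 : ℝ) : EReal) := by
          calc LyapE (θk k) (νk k : Measure (ℕ → Fin N))
              ≤ LyapE θ (νk k : Measure (ℕ → Fin N)) + ((ε/2 : ℝ) : EReal) :=
                (lyap_comp (ε/2) (by linarith) k hb).2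
            _ ≤ ((Ln θ (νk k : Measure (ℕ → Fin N)) n : ℝ) : EReal) + ((ε/2 : ℝ) : EReal) :=
                add_le_add h2'' le_rfl
            _ = ((Ln θ (νk k : Measure (ℕ → Fin N)) n + ε/2 : ℝ) : EReal) :=
                (EReal.coe_add _ _).symm
        have h3 : entropyInv (νk k : Measure (ℕ → Fin N)) ≤ Hn (νk k : Measure (ℕ → Fin N)) m := by
          rw [entropyInv_eq]
          exact ciInf_le (hbddH (νk k)) m
        calc pressureE θ
            ≤ ((entropyInv (νk k : Measure (ℕ → Fin N)) : ℝ) : EReal) +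
                LyapE (θk k) (νk k : Measure (ℕ → Fin N)) + ((ε/2 : ℝ) : EReal) := h1
          _ ≤ ((Hn (νk k : Measure (ℕ → Fin N)) m : ℝ) : EReal) +
                ((Ln θ (νk k : Measure (ℕ → Fin N)) n + ε/2 : ℝ) : EReal) +
                ((ε/2 : ℝ) : EReal) :=
              add_le_add (add_le_add (EReal.coe_le_coe_iff.2 h3) h2) le_rfl
          _ = ((Hn (νk k : Measure (ℕ → Fin N)) m + Ln θ (νk k : Measure (ℕ → Fin N)) n + ε : ℝ)
                : EReal) := by
              rw [← EReal.coe_add, ← EReal.coe_add]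
              congr 1
              ring
      have hlim2 : Tendsto (fun k => Hn (νk k : Measure (ℕ → Fin N)) m +
          Ln θ (νk k : Measure (ℕ → Fin N)) n + ε) atTop
          (𝓝 (Hn (ν : Measure (ℕ → Fin N)) m + Ln θ (ν : Measure (ℕ → Fin N)) n + ε)) :=
        ((tendsto_Hn hlim m).add (tendsto_Ln hlim θ n)).add tendsto_const_nhds
      refine ge_of_tendsto ((continuous_coe_real_ereal.tendsto _).comp hlim2) ?_
      rw [eventually_atTop]
      exact ⟨k0, hstep⟩
    have key2 : ∀ n : ℕ+, pressureE θ ≤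
        ((entropyInv (ν : Measure (ℕ → Fin N)) + Ln θ (ν : Measure (ℕ → Fin N)) n : ℝ)
          : EReal) := by
      intro n
      have he : entropyInv (ν : Measure (ℕ → Fin N)) + Ln θ (ν : Measure (ℕ → Fin N)) n =
          ⨅ m : ℕ+, (Hn (ν : Measure (ℕ → Fin N)) m + Ln θ (ν : Measure (ℕ → Fin N)) n) := by
        rw [entropyInv_eq]
        exact ciInf_add (hbddH ν) _
      rw [he]
      exact ereal_le_coe_ciInf (fun m => key m n)
    have hfin : ((entropyInv (ν : Measure (ℕ → Fin N)) : ℝ) : EReal) +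
        LyapE θ (ν : Measure (ℕ → Fin N)) =
        ⨅ n : ℕ+, ((entropyInv (ν : Measure (ℕ → Fin N)) +
          Ln θ (ν : Measure (ℕ → Fin N)) n : ℝ) : EReal) := by
      rw [LyapE_eq, coe_add_iInf]
      exact iInf_congr fun n => (EReal.coe_add _ _).symm
    rw [hfin]
    exact le_iInf key2
  · rw [pressureE_eq]
    refine le_iInf fun n => ?_
    have h1 : entropyInv (ν : Measure (ℕ → Fin N)) ≤ Hn (ν : Measure (ℕ → Fin N)) n := by
      rw [entropyInv_eq]
      exact ciInf_le (hbddH ν) n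
    have h2 : LyapE θ (ν : Measure (ℕ → Fin N)) ≤
        ((Ln θ (ν : Measure (ℕ → Fin N)) n : ℝ) : EReal) := by
      rw [LyapE_eq]
      exact iInf_le _ n
    calc ((entropyInv (ν : Measure (ℕ → Fin N)) : ℝ) : EReal) + LyapE θ (ν : Measure (ℕ → Fin N))
        ≤ ((Hn (ν : Measure (ℕ → Fin N)) n : ℝ) : EReal) +
            ((Ln θ (ν : Measure (ℕ → Fin N)) n : ℝ) : EReal) :=
          add_le_add (EReal.coe_le_coe_iff.2 h1) h2
      _ = ((Hn (ν : Measure (ℕ → Fin N)) n + Ln θ (ν : Measure (ℕ → Fin N)) n : ℝ) : EReal) :=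
          (EReal.coe_add _ _).symm
      _ ≤ ((An θ n : ℝ) : EReal) :=
          EReal.coe_le_coe_iff.2 (hn_add_ln_le_an hpos (ν : Measure (ℕ → Fin N)) n)
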